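/- If all power sums x_k = μ_1^k + ... + μ_n^k (k = 1,...,n) of the roots of q(x) = x^n + q_1 x^{n-1} + ... + q_n are nonnegative reals, then the list of roots of Q(x) = x^n + n q_1 x^{n-1} + n(n-1) q_2 x^{n-2} + ... + n! q_n is the spectrum of an entrywise nonnegative n×n real matrix. -/

import Mathlib

open Polynomial Matrix Finset

namespace NIEP
noncomputable section
variable {n : ℕ}

def pw (μ : Fin n → ℂ) (k : ℕ) : ℂ := ∑ i, μ i ^ k
def qp (μ : Fin n → ℂ) : ℂ[X] := ∏ i, (X - C (μ i))
def qc (μ : Fin n → ℂ) (k : ℕ) : ℂ := (qp μ).coeff (n - k)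

lemma qp_monic (μ : Fin n → ℂ) : (qp μ).Monic :=
  monic_prod_of_monic _ _ fun i _ => monic_X_sub_C _

lemma qp_natDegree (μ : Fin n → ℂ) : (qp μ).natDegree = n := by
  rw [qp, natDegree_prod _ _ (fun i _ => X_sub_C_ne_zero _)]
  simp [natDegree_X_sub_C]

lemma qc_zero (μ : Fin n → ℂ) : qc μ 0 = 1 := by
  have := (qp_monic μ).coeff_natDegree
  rwa [qp_natDegree] at this

lemma deriv_prod_lin (μ : Fin n → ℂ) (s : Finset (Fin n)) :
    derivative (∏ i ∈ s, (X - C (μ i))) =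
      ∑ i ∈ s, ∏ j ∈ s.erase i, (X - C (μ j)) := by
  classical
  induction s using Finset.induction_on with
  | empty => simp
  | @insert a s ha ih =>
    rw [Finset.prod_insert ha, derivative_mul, ih, Finset.sum_insert ha,
      Finset.erase_insert ha]
    have h2 : ∀ i ∈ s, (insert a s).erase i = insert a (s.erase i) := by
      intro i hi
      ext x
      simp only [Finset.mem_erase, Finset.mem_insert]
      constructor
      · rintro ⟨hx, hx2 | hx3⟩
        · exact Or.inl hx2
        · exact Or.inr ⟨hx, hx3⟩
      · rintro (rfl | ⟨hx, hx3⟩)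
        · exact ⟨fun hc => ha (hc ▸ hi), Or.inl rfl⟩
        · exact ⟨hx, Or.inr hx3⟩
    simp only [derivative_sub, derivative_X, derivative_C, sub_zero, one_mul]
    rw [Finset.mul_sum]
    congr 1
    refine Finset.sum_congr rfl fun i hi => ?_
    rw [h2 i hi, Finset.prod_insert (fun hc => ha ((Finset.mem_erase.mp hc).2))]

lemma keyA (μ : Fin n → ℂ) :
    (X : ℂ[X]) ^ n * derivative (qp μ) =
      qp μ * (∑ l ∈ range n, C (pw μ l) * X ^ (n - 1 - l)) +
      ∑ i : Fin n, C (μ i ^ n) * ∏ j ∈ Finset.univ.erase i, (X - C (μ j)) := by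
  have key : ∀ i : Fin n, (X:ℂ[X])^n * ∏ j ∈ Finset.univ.erase i, (X - C (μ j)) =
      (∏ j, (X - C (μ j))) * (∑ l ∈ range n, C (μ i ^ l) * X ^ (n-1-l)) +
      C (μ i ^ n) * ∏ j ∈ Finset.univ.erase i, (X - C (μ j)) := by
    intro i
    have hgeo : (∑ l ∈ range n, (C (μ i))^l * (X:ℂ[X]) ^ (n-1-l)) * (C (μ i) - X)
        = C (μ i) ^ n - X ^ n := geom_sum₂_mul _ _ n
    have hX : (X:ℂ[X])^n
        = C (μ i ^ n) + (X - C (μ i)) * ∑ l ∈ range n, C (μ i ^ l) * X ^ (n-1-l) := by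
      simp only [C_pow]
      linear_combination hgeo
    calc (X:ℂ[X])^n * ∏ j ∈ Finset.univ.erase i, (X - C (μ j))
        = ((X - C (μ i)) * ∏ j ∈ Finset.univ.erase i, (X - C (μ j)))
            * (∑ l ∈ range n, C (μ i ^ l) * X ^ (n-1-l))
          + C (μ i ^ n) * ∏ j ∈ Finset.univ.erase i, (X - C (μ j)) := by
          rw [hX]; ring
      _ = _ := by rw [Finset.mul_prod_erase Finset.univ (fun j => (X : ℂ[X]) - C (μ j)) (Finset.mem_univ i)]
  rw [qp, deriv_prod_lin, Finset.mul_sum]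
  rw [Finset.sum_congr rfl (fun i _ => key i), Finset.sum_add_distrib]
  congr 1
  rw [← Finset.mul_sum]
  congr 1
  rw [Finset.sum_comm]
  refine Finset.sum_congr rfl fun l _ => ?_
  rw [pw, map_sum, Finset.sum_mul]

lemma erase_monic (μ : Fin n → ℂ) (i : Fin n) :
    (∏ j ∈ Finset.univ.erase i, (X - C (μ j))).Monic :=
  monic_prod_of_monic _ _ fun j _ => monic_X_sub_C _

lemma erase_natDegree (μ : Fin n → ℂ) (i : Fin n) :
    (∏ j ∈ Finset.univ.erase i, (X - C (μ j))).natDegree = n - 1 := by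
  rw [natDegree_prod _ _ (fun j _ => X_sub_C_ne_zero _)]
  simp [natDegree_X_sub_C, Finset.card_erase_of_mem]

lemma pw_zero (μ : Fin n → ℂ) : pw μ 0 = (n : ℂ) := by
  simp [pw]

lemma newton (μ : Fin n → ℂ) (K : ℕ) (h1 : 1 ≤ K) (h2 : K ≤ n) :
    (K : ℂ) * qc μ K + ∑ i ∈ range K, pw μ (K - i) * qc μ i = 0 := by
  have hA := congrArg (fun p : ℂ[X] => p.coeff (2*n-1-K)) (keyA μ)
  simp only [coeff_add] at hA
  -- left side
  have hL : ((X:ℂ[X])^n * derivative (qp μ)).coeff (2*n-1-K) = ((n-K : ℕ) : ℂ) * qc μ K := by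
    rw [mul_comm, coeff_mul_X_pow']
    rcases Nat.lt_or_ge K n with hK | hK
    · rw [if_pos (by omega), show 2*n-1-K-n = n-1-K by omega, coeff_derivative]
      rw [show n-1-K+1 = n-K from by omega, qc]
      have hc : ((n-1-K:ℕ):ℂ) + 1 = ((n-K:ℕ):ℂ) := by
        exact_mod_cast congrArg (Nat.cast (R := ℂ)) (show (n-1-K)+1 = n-K by omega)
      rw [hc]; ring
    · have hKn : K = n := le_antisymm h2 hK
      subst hKn
      rw [if_neg (by omega)]
      simp
  -- first right term
  have hR1 : (qp μ * ∑ l ∈ range n, C (pw μ l) * X^(n-1-l)).coeff (2*n-1-K)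
      = ∑ l ∈ range n, pw μ l * (qp μ).coeff (n-K+l) := by
    rw [Finset.mul_sum, finset_sum_coeff]
    refine Finset.sum_congr rfl fun l hl => ?_
    have hl' : l < n := Finset.mem_range.mp hl
    rw [show qp μ * (C (pw μ l) * X^(n-1-l)) = (C (pw μ l) * qp μ) * X^(n-1-l) by ring]
    rw [coeff_mul_X_pow', if_pos (by omega), coeff_C_mul]
    congr 2
    omega
  have hhigh : ∀ m, n < m → (qp μ).coeff m = 0 := fun m hm =>
    coeff_eq_zero_of_natDegree_lt (by rw [qp_natDegree]; exact hm)
  -- second right term vanishes / contributes pw n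
  have hR : (qp μ * ∑ l ∈ range n, C (pw μ l) * X^(n-1-l)).coeff (2*n-1-K)
      + (∑ i : Fin n, C (μ i ^ n) * ∏ j ∈ Finset.univ.erase i, (X - C (μ j))).coeff (2*n-1-K)
      = ∑ l ∈ range (K+1), pw μ l * (qp μ).coeff (n-K+l) := by
    rw [hR1, finset_sum_coeff]
    rcases Nat.lt_or_ge K n with hK | hK
    · -- K < n
      have h2nd : ∀ i : Fin n, (C (μ i ^ n) * ∏ j ∈ Finset.univ.erase i, (X - C (μ j))).coeff (2*n-1-K)
          = 0 := by
        intro i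
        rw [coeff_C_mul, coeff_eq_zero_of_natDegree_lt, mul_zero]
        rw [erase_natDegree]; omega
      rw [Finset.sum_congr rfl fun i _ => h2nd i, Finset.sum_const, smul_zero, add_zero]
      refine (Finset.sum_subset (Finset.range_subset_range.mpr (by omega)) ?_).symm
      intro l hl hnot
      have : K + 1 ≤ l := by simpa using hnot
      rw [hhigh (n-K+l) (by omega), mul_zero]
    · -- K = n
      have hKn : K = n := le_antisymm h2 hK
      subst hKn
      have h2nd : ∀ i : Fin K, (C (μ i ^ K) * ∏ j ∈ Finset.univ.erase i, (X - C (μ j))).coeff (2*K-1-K)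
          = μ i ^ K := by
        intro i
        rw [coeff_C_mul, show 2*K-1-K = K-1 by omega]
        have hcd := (erase_monic μ i).coeff_natDegree
        rw [erase_natDegree] at hcd
        rw [hcd, mul_one]
      rw [Finset.sum_congr rfl fun i _ => h2nd i]
      rw [Finset.sum_range_succ]
      have hc1 : (qp μ).coeff (K - K + K) = 1 := by
        rw [show K - K + K = K by omega, ← qc_zero μ, qc, Nat.sub_zero]
      rw [hc1, mul_one, pw]
  rw [hL, hR] at hA
  rw [Finset.sum_range_succ'] at hA
  rw [show n - K + 0 = n - K by omega, pw_zero] at hA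
  have hsum : ∑ l ∈ range K, pw μ (l+1) * (qp μ).coeff (n-K+(l+1))
      = ∑ i ∈ range K, pw μ (K - i) * qc μ i := by
    rw [← Finset.sum_range_reflect (fun i => pw μ (K - i) * qc μ i) K]
    refine Finset.sum_congr rfl fun l hl => ?_
    have hl' : l < K := Finset.mem_range.mp hl
    rw [show K - (K-1-l) = l+1 by omega]
    congr 1
    rw [qc]
    congr 1
    omega
  rw [hsum] at hA
  have hcast : ((n - K : ℕ) : ℂ) = (n : ℂ) - K := by
    push_cast [Nat.cast_sub h2]; ring
  rw [hcast] at hA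
  have hqc : (qp μ).coeff (n - K) = qc μ K := rfl
  rw [hqc] at hA
  linear_combination -hA

def csq (μ : Fin n → ℂ) (d : ℕ) : ℂ[X] :=
  (if d = 0 then (X : ℂ[X]) else 0) - C (pw μ (d+1))

def asq (μ : Fin n → ℂ) (j : ℕ) : ℂ[X] :=
  ∑ k ∈ range (j+1), C ((((j-k).factorial : ℂ))⁻¹ * qc μ k) * X ^ (j-k)

lemma asq_zero (μ : Fin n → ℂ) : asq μ 0 = 1 := by
  simp [asq, qc_zero]

lemma tri_swap {M : Type*} [AddCommMonoid M] (N : ℕ) (f : ℕ → ℕ → M) :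
    ∑ i ∈ range N, ∑ l ∈ range (N - i), f i l
      = ∑ l ∈ range N, ∑ i ∈ range (N - l), f i l := by
  have h1 : ∀ (g : ℕ → ℕ → M), (∀ i, ∑ l ∈ range (N-i), g i l
      = ∑ l ∈ range N, if i + l < N then g i l else 0) := by
    intro g i
    rw [← Finset.sum_filter]
    apply Finset.sum_congr _ (fun _ _ => rfl)
    ext l
    simp only [Finset.mem_filter, Finset.mem_range]
    omega
  calc ∑ i ∈ range N, ∑ l ∈ range (N - i), f i l
      = ∑ i ∈ range N, ∑ l ∈ range N, if i + l < N then f i l else 0 :=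
        Finset.sum_congr rfl fun i _ => h1 (fun i l => f i l) i
    _ = ∑ l ∈ range N, ∑ i ∈ range N, if i + l < N then f i l else 0 := Finset.sum_comm
    _ = ∑ l ∈ range N, ∑ i ∈ range (N - l), f i l := by
        refine Finset.sum_congr rfl fun l _ => ?_
        rw [h1 (fun l i => f i l) l]
        refine Finset.sum_congr rfl fun i _ => ?_
        congr 1
        simp only [eq_iff_iff]
        omega

lemma N1 (μ : Fin n → ℂ) (m : ℕ) (hm : m + 1 ≤ n) :
    ∑ i ∈ range (m+1), csq μ i * asq μ (m-i)
      = C (((m+1:ℕ) : ℂ)) * asq μ (m+1) := by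
  have hsplit : ∀ i ∈ range (m+1), csq μ i * asq μ (m-i)
      = (if i = 0 then X * asq μ m else 0) - C (pw μ (i+1)) * asq μ (m-i) := by
    intro i _
    rcases eq_or_ne i 0 with rfl | h
    · simp only [csq, Nat.sub_zero]
      simp only [if_true]
      ring
    · simp only [csq]
      rw [if_neg h, if_neg h]
      ring
  rw [Finset.sum_congr rfl hsplit, Finset.sum_sub_distrib,
    Finset.sum_ite_eq' (range (m+1)) 0 (fun _ => X * asq μ m),
    if_pos (Finset.mem_range.mpr (by omega))]
  -- key1
  have key1 : C (((m+1:ℕ)) : ℂ) * asq μ (m+1) - X * asq μ m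
      = ∑ k ∈ range (m+2), C ((k:ℂ) * (((m+1-k).factorial : ℂ))⁻¹ * qc μ k) * X ^ (m+1-k) := by
    rw [asq, asq, Finset.mul_sum, Finset.mul_sum]
    rw [Finset.sum_range_succ (fun k => C (((m+1:ℕ):ℂ)) * (C ((((m+1-k).factorial : ℂ))⁻¹ * qc μ k) * X ^ (m+1-k)))]
    rw [Finset.sum_range_succ (fun k => C ((k:ℂ) * (((m+1-k).factorial : ℂ))⁻¹ * qc μ k) * X ^ (m+1-k))]
    rw [add_sub_right_comm]
    congr 1
    · rw [← Finset.sum_sub_distrib]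
      refine Finset.sum_congr rfl fun k hk => ?_
      have hk' : k ≤ m := by simpa using Nat.lt_succ_iff.mp (Finset.mem_range.mp hk)
      have hfac : (((m+1-k).factorial : ℕ) : ℂ) = (((m-k : ℕ):ℂ) + 1) * (((m-k).factorial : ℕ) : ℂ) := by
        rw [show m+1-k = (m-k)+1 by omega, Nat.factorial_succ]
        push_cast
        ring
      have hxp : (X:ℂ[X]) * (C ((((m-k).factorial : ℂ))⁻¹ * qc μ k) * X ^ (m-k))
          = C ((((m-k).factorial : ℂ))⁻¹ * qc μ k) * X ^ (m+1-k) := by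
        rw [show m+1-k = (m-k)+1 by omega, pow_succ]
        ring
      rw [hxp, ← mul_assoc, ← C_mul, ← sub_mul, ← C_sub]
      congr 2
      have h2 : (((m+1-k).factorial : ℕ) : ℂ) ≠ 0 := Nat.cast_ne_zero.mpr (Nat.factorial_ne_zero _)
      have h3 : (((m-k).factorial : ℕ) : ℂ) ≠ 0 := Nat.cast_ne_zero.mpr (Nat.factorial_ne_zero _)
      have hmk : ((m-k : ℕ) : ℂ) = (m:ℂ) - k := Nat.cast_sub hk'
      field_simp
      rw [hfac]
      push_cast
      rw [hmk]
      ring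
    · rw [show m+1-(m+1) = 0 by omega, ← mul_assoc, ← C_mul]
      congr 2
      push_cast
      ring
  -- second sum, fully expanded
  have expand : ∀ i ∈ range (m+1), C (pw μ (i+1)) * asq μ (m-i)
      = ∑ l ∈ range (m+1-i), C (pw μ (i+1) * ((l.factorial : ℂ))⁻¹ * qc μ (m-i-l)) * X ^ l := by
    intro i hi
    have hi' : i ≤ m := by simpa using Nat.lt_succ_iff.mp (Finset.mem_range.mp hi)
    rw [asq, Finset.mul_sum, show m-i+1 = m+1-i by omega, eq_comm,
      ← Finset.sum_range_reflect (fun l => C (pw μ (i+1) * ((l.factorial : ℂ))⁻¹ * qc μ (m-i-l)) * X ^ l) (m+1-i)]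
    refine Finset.sum_congr rfl fun k hk => ?_
    have hk' : k < m+1-i := Finset.mem_range.mp hk
    rw [show m+1-i-1-k = m-i-k by omega, show m-i-(m-i-k) = k by omega,
      ← mul_assoc, ← C_mul, mul_assoc]
  have key2 : ∑ k ∈ range (m+2), C ((k:ℂ) * (((m+1-k).factorial : ℂ))⁻¹ * qc μ k) * X ^ (m+1-k)
      = ∑ l ∈ range (m+2), C ((((m+1-l : ℕ)):ℂ) * ((l.factorial : ℂ))⁻¹ * qc μ (m+1-l)) * X ^ l := by
    rw [← Finset.sum_range_reflect (fun k => C ((k:ℂ) * (((m+1-k).factorial : ℂ))⁻¹ * qc μ k) * X ^ (m+1-k)) (m+2)]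
    refine Finset.sum_congr rfl fun l hl => ?_
    have hl' : l < m+2 := Finset.mem_range.mp hl
    rw [show m+2-1-l = m+1-l by omega, show m+1-(m+1-l) = l by omega]
  have SS : ∑ k ∈ range (m+2), C ((k:ℂ) * (((m+1-k).factorial : ℂ))⁻¹ * qc μ k) * X ^ (m+1-k)
      + ∑ i ∈ range (m+1), C (pw μ (i+1)) * asq μ (m-i) = 0 := by
    rw [key2, Finset.sum_congr rfl expand,
      tri_swap (m+1) (fun i l => C (pw μ (i+1) * ((l.factorial : ℂ))⁻¹ * qc μ (m-i-l)) * X ^ l)]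
    have hext : ∑ l ∈ range (m+2), ∑ i ∈ range (m+1-l), C (pw μ (i+1) * ((l.factorial : ℂ))⁻¹ * qc μ (m-i-l)) * X ^ l
        = ∑ l ∈ range (m+1), ∑ i ∈ range (m+1-l), C (pw μ (i+1) * ((l.factorial : ℂ))⁻¹ * qc μ (m-i-l)) * X ^ l := by
      rw [Finset.sum_range_succ]
      simp
    rw [← hext, ← Finset.sum_add_distrib]
    refine Finset.sum_eq_zero fun l hl => ?_
    have hl' : l < m+2 := Finset.mem_range.mp hl
    have hinner : ∑ i ∈ range (m+1-l), C (pw μ (i+1) * ((l.factorial : ℂ))⁻¹ * qc μ (m-i-l)) * X ^ l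
        = C (∑ i ∈ range (m+1-l), pw μ (i+1) * ((l.factorial : ℂ))⁻¹ * qc μ ((m+1-l)-1-i)) * X ^ l := by
      rw [map_sum, Finset.sum_mul]
      refine Finset.sum_congr rfl fun i hi => ?_
      have hi' : i < m+1-l := Finset.mem_range.mp hi
      rw [show m-i-l = (m+1-l)-1-i by omega]
    rw [hinner, ← add_mul, ← map_add]
    rcases Nat.eq_zero_or_pos (m+1-l) with h0 | hpos
    · rw [h0]
      simp
    · have hrefl : ∑ i ∈ range (m+1-l), pw μ (i+1) * ((l.factorial : ℂ))⁻¹ * qc μ ((m+1-l)-1-i)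
          = ((l.factorial : ℂ))⁻¹ * ∑ i ∈ range (m+1-l), pw μ ((m+1-l)-i) * qc μ i := by
        rw [Finset.mul_sum,
          ← Finset.sum_range_reflect (fun i => ((l.factorial : ℂ))⁻¹ * (pw μ ((m+1-l)-i) * qc μ i)) (m+1-l)]
        refine Finset.sum_congr rfl fun i hi => ?_
        have hi' : i < m+1-l := Finset.mem_range.mp hi
        rw [show (m+1-l) - ((m+1-l)-1-i) = i+1 by omega]
        ring
      rw [hrefl]
      have hnewt := newton μ (m+1-l) hpos (by omega)
      have : ((m+1-l : ℕ):ℂ) * ((l.factorial : ℂ))⁻¹ * qc μ (m+1-l)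
          + ((l.factorial : ℂ))⁻¹ * ∑ i ∈ range (m+1-l), pw μ ((m+1-l)-i) * qc μ i = 0 := by
        linear_combination ((l.factorial : ℂ))⁻¹ * hnewt
      rw [this, map_zero, zero_mul]
  linear_combination - key1 - SS

def Aps (μ : Fin n → ℂ) : PowerSeries ℂ[X] := PowerSeries.mk (asq μ)
def Bps (μ : Fin n → ℂ) : PowerSeries ℂ[X] := PowerSeries.invOfUnit (Aps μ) 1
def bsq (μ : Fin n → ℂ) (j : ℕ) : ℂ[X] := PowerSeries.coeff j (Bps μ)
def Cps (μ : Fin n → ℂ) : PowerSeries ℂ[X] := PowerSeries.mk (csq μ)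
def Bdps (μ : Fin n → ℂ) : PowerSeries ℂ[X] :=
  PowerSeries.mk (fun j => C (((j+1:ℕ)):ℂ) * bsq μ (j+1))

lemma coeff_mul_range (φ ψ : PowerSeries ℂ[X]) (m : ℕ) :
    PowerSeries.coeff m (φ * ψ)
      = ∑ j ∈ range (m+1),
          PowerSeries.coeff j φ * PowerSeries.coeff (m-j) ψ := by
  rw [PowerSeries.coeff_mul, Finset.Nat.sum_antidiagonal_eq_sum_range_succ_mk]

lemma hAB (μ : Fin n → ℂ) : Aps μ * Bps μ = 1 := by
  refine PowerSeries.mul_invOfUnit _ _ ?_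
  simp [Aps, asq_zero]

lemma bsq_zero (μ : Fin n → ℂ) : bsq μ 0 = 1 := by
  rw [bsq, PowerSeries.coeff_zero_eq_constantCoeff, Bps,
    PowerSeries.constantCoeff_invOfUnit]
  simp

lemma N1coeff (μ : Fin n → ℂ) (j : ℕ) (hj : j + 1 ≤ n) :
    PowerSeries.coeff j (Cps μ * Aps μ) = C (((j+1:ℕ)):ℂ) * asq μ (j+1) := by
  rw [coeff_mul_range]
  simp only [Cps, Aps, PowerSeries.coeff_mk]
  exact N1 μ j hj

lemma S1lem (μ : Fin n → ℂ) (m : ℕ) (hm : m + 1 ≤ n) :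
    ∑ j ∈ range (m+2), C ((j:ℕ):ℂ) * (asq μ j * bsq μ (m+1-j)) = csq μ m := by
  rw [Finset.sum_range_succ']
  simp only [Nat.cast_zero, map_zero, zero_mul, add_zero]
  have h5 : ∀ j ∈ range (m+1), C (((j+1:ℕ)):ℂ) * (asq μ (j+1) * bsq μ (m+1-(j+1)))
      = PowerSeries.coeff j (Cps μ * Aps μ) * bsq μ (m-j) := by
    intro j hj
    have hj' : j < m+1 := Finset.mem_range.mp hj
    rw [N1coeff μ j (by omega), show m+1-(j+1) = m-j by omega, mul_assoc]
  rw [Finset.sum_congr rfl h5]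
  have h6 : ∑ j ∈ range (m+1), PowerSeries.coeff j (Cps μ * Aps μ) * bsq μ (m-j)
      = PowerSeries.coeff m ((Cps μ * Aps μ) * Bps μ) := by
    rw [coeff_mul_range]
    simp only [bsq]
  rw [h6, mul_assoc, hAB, mul_one, Cps, PowerSeries.coeff_mk]

lemma Nstar (μ : Fin n → ℂ) (m : ℕ) (hm : m + 1 ≤ n) :
    csq μ m + PowerSeries.coeff m (Aps μ * Bdps μ) = 0 := by
  have h0 : PowerSeries.coeff (m+1) (Aps μ * Bps μ) = 0 := by
    rw [hAB]
    simp [PowerSeries.coeff_one]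
  rw [coeff_mul_range] at h0
  simp only [Aps, PowerSeries.coeff_mk] at h0
  have h0' : ∑ j ∈ range (m+2), asq μ j * bsq μ (m+1-j) = 0 := h0
  have hsplit : ∀ j ∈ range (m+2), C (((m+1:ℕ)):ℂ) * (asq μ j * bsq μ (m+1-j))
      = C ((j:ℕ):ℂ) * (asq μ j * bsq μ (m+1-j))
        + C (((m+1-j:ℕ)):ℂ) * (asq μ j * bsq μ (m+1-j)) := by
    intro j hj
    have hj' : j ≤ m+1 := by simpa using Nat.lt_succ_iff.mp (Finset.mem_range.mp hj)
    rw [← add_mul, ← map_add]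
    congr 2
    rw [Nat.cast_sub (by omega : j ≤ m+1)]
    push_cast
    ring
  have hzero : ∑ j ∈ range (m+2), C (((m+1:ℕ)):ℂ) * (asq μ j * bsq μ (m+1-j)) = 0 := by
    rw [← Finset.mul_sum, h0', mul_zero]
  rw [Finset.sum_congr rfl hsplit, Finset.sum_add_distrib] at hzero
  -- first piece = csq m
  have hS1 := S1lem μ m hm
  -- second piece = coeff m (Aps * Bdps)
  have hS2 : ∑ j ∈ range (m+2), C (((m+1-j:ℕ)):ℂ) * (asq μ j * bsq μ (m+1-j))
      = PowerSeries.coeff m (Aps μ * Bdps μ) := by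
    rw [Finset.sum_range_succ]
    simp only [Nat.sub_self, Nat.cast_zero, map_zero, zero_mul, add_zero]
    rw [coeff_mul_range]
    refine Finset.sum_congr rfl fun j hj => ?_
    have hj' : j < m+1 := Finset.mem_range.mp hj
    simp only [Aps, Bdps, PowerSeries.coeff_mk]
    rw [show m+1-j = (m-j)+1 by omega]
    ring
  rw [hS1, hS2] at hzero
  linear_combination hzero

lemma N3 (μ : Fin n → ℂ) (m : ℕ) (hm : m + 1 ≤ n) :
    PowerSeries.coeff m (Cps μ * Bps μ)
      = - (C (((m+1:ℕ)):ℂ) * bsq μ (m+1)) := by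
  have h1 : PowerSeries.coeff m (Bdps μ)
      = PowerSeries.coeff m (Bps μ * (Aps μ * Bdps μ)) := by
    rw [← mul_assoc, mul_comm (Bps μ) (Aps μ), hAB, one_mul]
  rw [coeff_mul_range] at h1
  have h2 : ∀ j ∈ range (m+1),
      PowerSeries.coeff j (Bps μ) * PowerSeries.coeff (m-j) (Aps μ * Bdps μ)
      = bsq μ j * (- csq μ (m-j)) := by
    intro j hj
    have hj' : j < m+1 := Finset.mem_range.mp hj
    have := Nstar μ (m-j) (by omega)
    rw [bsq]
    congr 1
    linear_combination this
  rw [Finset.sum_congr rfl h2] at h1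
  have h3 : ∑ j ∈ range (m+1), bsq μ j * (- csq μ (m-j))
      = - PowerSeries.coeff m (Bps μ * Cps μ) := by
    rw [coeff_mul_range, ← Finset.sum_neg_distrib]
    refine Finset.sum_congr rfl fun j hj => ?_
    simp only [bsq, Cps, PowerSeries.coeff_mk]
    ring
  rw [h3] at h1
  have h4 : PowerSeries.coeff m (Bdps μ) = C (((m+1:ℕ)):ℂ) * bsq μ (m+1) := by
    simp [Bdps]
  rw [mul_comm (Cps μ) (Bps μ)]
  linear_combination h1 - h4

def Kco (μ : Fin n → ℂ) (j : ℕ) : ℂ[X] :=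
  if j = 0 then 0 else C ((j:ℂ) * (((n:ℂ) - (j:ℕ)))⁻¹) * asq μ j

def Kps (μ : Fin n → ℂ) : PowerSeries ℂ[X] := PowerSeries.mk (Kco μ)

def Gps (μ : Fin n → ℂ) : PowerSeries ℂ[X] := 1 + Kps μ * Bps μ

lemma hdag (μ : Fin n → ℂ) (m : ℕ) (hm : m + 2 ≤ n) :
    C ((n:ℂ) - 1 - (m:ℂ)) * PowerSeries.coeff (m+1) (Kps μ * Bps μ)
      - PowerSeries.coeff m (Kps μ * (Cps μ * Bps μ))
    = ∑ j ∈ range (m+2), C ((j:ℕ):ℂ) * (asq μ j * bsq μ (m+1-j)) := by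
  have hB : ∀ k, PowerSeries.coeff k (Bps μ) = bsq μ k := fun k => rfl
  rw [coeff_mul_range, coeff_mul_range, Finset.mul_sum]
  simp only [Kps, PowerSeries.coeff_mk, hB]
  have hN3 : ∀ j ∈ range (m+1),
      Kco μ j * PowerSeries.coeff (m-j) (Cps μ * Bps μ)
        = Kco μ j * (- (C (((m+1-j:ℕ)):ℂ) * bsq μ (m+1-j))) := by
    intro j hj
    have hj' : j < m+1 := Finset.mem_range.mp hj
    rw [N3 μ (m-j) (by omega), show m-j+1 = m+1-j by omega]
  rw [Finset.sum_congr rfl hN3]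
  rw [Finset.sum_range_succ (fun j => C ((n:ℂ) - 1 - (m:ℂ)) * (Kco μ j * bsq μ (m+1-j)))]
  rw [Finset.sum_range_succ (fun j => C ((j:ℕ):ℂ) * (asq μ j * bsq μ (m+1-j)))]
  have hnat : ((n:ℂ) - ((m+1:ℕ):ℂ)) = ((n - (m+1) : ℕ) : ℂ) := (Nat.cast_sub (by omega)).symm
  have hnz : ((n:ℂ) - ((m+1:ℕ):ℂ)) ≠ 0 := by
    rw [hnat]
    exact Nat.cast_ne_zero.mpr (by omega)
  have hlast : C ((n:ℂ) - 1 - (m:ℂ)) * (Kco μ (m+1) * bsq μ (m+1-(m+1)))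
      = C (((m+1:ℕ)):ℂ) * (asq μ (m+1) * bsq μ (m+1-(m+1))) := by
    rw [Kco, if_neg (by omega)]
    have hC' : C ((n:ℂ) - 1 - (m:ℂ)) * C (((m+1:ℕ):ℂ) * (((n:ℂ) - ((m+1:ℕ):ℂ)))⁻¹)
        = C (((m+1:ℕ)):ℂ) := by
      rw [← C_mul]
      congr 1
      have hid : (n:ℂ) - 1 - (m:ℂ) = (n:ℂ) - ((m+1:ℕ):ℂ) := by push_cast; ring
      rw [hid, mul_comm ((((m+1:ℕ)):ℂ)) _, ← mul_assoc, mul_inv_cancel₀ hnz, one_mul]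
    linear_combination (asq μ (m+1) * bsq μ (m+1-(m+1))) * hC'
  have hterm : ∀ j ∈ range (m+1),
      C ((n:ℂ) - 1 - (m:ℂ)) * (Kco μ j * bsq μ (m+1-j))
        = C ((j:ℕ):ℂ) * (asq μ j * bsq μ (m+1-j))
          + Kco μ j * (- (C (((m+1-j:ℕ)):ℂ) * bsq μ (m+1-j))) := by
    intro j hj
    have hj' : j < m+1 := Finset.mem_range.mp hj
    rcases eq_or_ne j 0 with rfl | hjne
    · simp [Kco]
    · rw [Kco, if_neg hjne]
      have hnatj : ((n:ℂ) - ((j:ℕ):ℂ)) = ((n - j : ℕ) : ℂ) := (Nat.cast_sub (by omega)).symm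
      have hnzj : ((n:ℂ) - ((j:ℕ):ℂ)) ≠ 0 := by
        rw [hnatj]
        exact Nat.cast_ne_zero.mpr (by omega)
      have hcmj : (((m+1-j:ℕ)):ℂ) = (m:ℂ) + 1 - (j:ℂ) := by
        rw [Nat.cast_sub (by omega)]
        push_cast
        ring
      have hC' : C ((n:ℂ) - 1 - (m:ℂ)) * C ((j:ℂ) * (((n:ℂ) - ((j:ℕ):ℂ)))⁻¹)
          = C ((j:ℕ):ℂ) - C (((m+1-j:ℕ)):ℂ) * C ((j:ℂ) * (((n:ℂ) - ((j:ℕ):ℂ)))⁻¹) := by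
        rw [← C_mul, ← C_mul, ← C_sub]
        congr 1
        rw [hcmj]
        field_simp
        ring
      linear_combination (asq μ j * bsq μ (m+1-j)) * hC'
  rw [Finset.sum_congr rfl hterm, Finset.sum_add_distrib]
  linear_combination hlast

lemma L1ps (μ : Fin n → ℂ) (m : ℕ) (hm : m + 2 ≤ n) :
    C ((n:ℂ) - 1 - (m:ℂ)) * PowerSeries.coeff (m+1) (Gps μ)
      = PowerSeries.coeff m (Cps μ * Gps μ) := by
  have hg1 : PowerSeries.coeff (m+1) (Gps μ)
      = PowerSeries.coeff (m+1) (Kps μ * Bps μ) := by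
    rw [Gps, map_add, PowerSeries.coeff_one, if_neg (Nat.succ_ne_zero m), zero_add]
  have hg2 : PowerSeries.coeff m (Cps μ * Gps μ)
      = csq μ m + PowerSeries.coeff m (Kps μ * (Cps μ * Bps μ)) := by
    rw [Gps, mul_add, mul_one, map_add, mul_left_comm]
    congr 1
    rw [Cps, PowerSeries.coeff_mk]
  have hd := hdag μ m hm
  have hs := S1lem μ m (by omega)
  rw [hg1, hg2]
  linear_combination hd + hs

lemma L2ps (μ : Fin n → ℂ) (hn : 1 ≤ n) :
    PowerSeries.coeff (n-1) (Cps μ * Gps μ) = C ((n:ℂ)) * asq μ n := by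
  have hg2 : PowerSeries.coeff (n-1) (Cps μ * Gps μ)
      = csq μ (n-1) + PowerSeries.coeff (n-1) (Kps μ * (Cps μ * Bps μ)) := by
    rw [Gps, mul_add, mul_one, map_add, mul_left_comm]
    congr 1
    rw [Cps, PowerSeries.coeff_mk]
  have hK : PowerSeries.coeff (n-1) (Kps μ * (Cps μ * Bps μ))
      = - ∑ j ∈ range (n-1+1), C ((j:ℕ):ℂ) * (asq μ j * bsq μ (n-1+1-j)) := by
    rw [coeff_mul_range]
    simp only [Kps, PowerSeries.coeff_mk]
    rw [← Finset.sum_neg_distrib]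
    refine Finset.sum_congr rfl fun j hj => ?_
    have hj' : j < n-1+1 := Finset.mem_range.mp hj
    rw [N3 μ (n-1-j) (by omega)]
    rcases eq_or_ne j 0 with rfl | hjne
    · simp [Kco]
    · rw [Kco, if_neg hjne]
      have hnzj : ((n:ℂ) - ((j:ℕ):ℂ)) ≠ 0 := by
        rw [(Nat.cast_sub (by omega : j ≤ n)).symm]
        exact Nat.cast_ne_zero.mpr (by omega)
      rw [show n-1-j+1 = n-1+1-j by omega]
      have hcast : ((n-1+1-j:ℕ):ℂ) = (n:ℂ) - (j:ℂ) := by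
        rw [show n-1+1-j = n-j by omega, Nat.cast_sub (by omega)]
      rw [hcast]
      have hC' : C ((j:ℂ) * (((n:ℂ) - ((j:ℕ):ℂ)))⁻¹) * C ((n:ℂ) - (j:ℂ))
          = C ((j:ℕ):ℂ) := by
        rw [← C_mul]
        congr 1
        rw [mul_assoc, inv_mul_cancel₀ hnzj, mul_one]
      linear_combination - (asq μ j * bsq μ (n-1+1-j)) * hC'
  have hs := S1lem μ (n-1) (by omega)
  rw [Finset.sum_range_succ] at hs
  rw [Nat.sub_self, bsq_zero, mul_one] at hs
  rw [show n-1+1 = n by omega] at hs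
  rw [hg2, hK]
  rw [show n-1+1 = n by omega]
  linear_combination - hs

def Mmat (μ : Fin n → ℂ) (m t : ℕ) : Matrix (Fin m) (Fin m) ℂ[X] :=
  Matrix.of fun i j =>
    if (i:ℕ) = m - 1 then csq μ (m - 1 - (j:ℕ) + t)
    else if (j:ℕ) = (i:ℕ) + 1 then -(((n - 1 - (i:ℕ) : ℕ) : ℂ[X]))
    else if (j:ℕ) ≤ (i:ℕ) then csq μ ((i:ℕ) - (j:ℕ))
    else 0

lemma Mmat_one (μ : Fin n → ℂ) (t : ℕ) : (Mmat μ 1 t).det = csq μ t := by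
  rw [Matrix.det_fin_one]
  simp [Mmat]

lemma detrec (μ : Fin n → ℂ) (m t : ℕ) :
    (Mmat μ (m+2) t).det
      = csq μ t * (Mmat μ (m+1) 0).det
        + ((n - 1 - m : ℕ) : ℂ[X]) * (Mmat μ (m+1) (t+1)).det := by
  rw [Matrix.det_succ_column (Mmat μ (m+2) t) (Fin.last (m+1))]
  rw [Fin.sum_univ_castSucc, Fin.sum_univ_castSucc]
  have hzero : (∑ i : Fin m,
      (-1 : ℂ[X]) ^ (((i.castSucc.castSucc : Fin (m+2)) : ℕ) + ((Fin.last (m+1) : Fin (m+2)) : ℕ))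
        * Mmat μ (m+2) t i.castSucc.castSucc (Fin.last (m+1))
        * ((Mmat μ (m+2) t).submatrix i.castSucc.castSucc.succAbove (Fin.last (m+1)).succAbove).det) = 0 := by
    refine Finset.sum_eq_zero fun i _ => ?_
    have hent : Mmat μ (m+2) t i.castSucc.castSucc (Fin.last (m+1)) = 0 := by
      have hi : (i : ℕ) < m := i.isLt
      simp only [Mmat, Matrix.of_apply, Fin.coe_castSucc, Fin.val_last]
      rw [if_neg (by omega), if_neg (by omega), if_neg (by omega)]
    rw [hent, mul_zero, zero_mul]
  rw [hzero, zero_add]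
  -- the two submatrices
  have hsub2 : (Mmat μ (m+2) t).submatrix (Fin.last (m+1)).succAbove (Fin.last (m+1)).succAbove
      = Mmat μ (m+1) 0 := by
    refine Matrix.ext fun i j => ?_
    rw [Matrix.submatrix_apply, Fin.succAbove_last]
    have hi : (i : ℕ) < m+1 := i.isLt
    have hj : (j : ℕ) < m+1 := j.isLt
    simp only [Mmat, Matrix.of_apply, Fin.coe_castSucc]
    split_ifs <;> first | rfl | (congr 1; omega) | (exfalso; omega)
  have hsub1 : (Mmat μ (m+2) t).submatrix ((Fin.last m).castSucc).succAbove (Fin.last (m+1)).succAbove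
      = Mmat μ (m+1) (t+1) := by
    refine Matrix.ext fun i j => ?_
    rw [Matrix.submatrix_apply, Fin.succAbove_last]
    have hi : (i : ℕ) < m+1 := i.isLt
    have hj : (j : ℕ) < m+1 := j.isLt
    rcases Nat.lt_or_ge (i:ℕ) m with him | him
    · have hrow : ((Fin.last m).castSucc).succAbove i = i.castSucc := by
        refine Fin.succAbove_of_castSucc_lt _ _ ?_
        rw [Fin.castSucc_lt_castSucc_iff]
        exact Fin.lt_def.mpr (by simpa using him)
      rw [hrow]
      simp only [Mmat, Matrix.of_apply, Fin.coe_castSucc]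
      split_ifs <;> first | rfl | (congr 1; omega) | (exfalso; omega)
    · have hieq : (i:ℕ) = m := by omega
      have hrow : ((Fin.last m).castSucc).succAbove i = i.succ := by
        refine Fin.succAbove_of_le_castSucc _ _ ?_
        rw [Fin.le_def]
        simpa using by omega
      rw [hrow]
      simp only [Mmat, Matrix.of_apply, Fin.coe_castSucc, Fin.val_succ]
      split_ifs <;> first | rfl | (congr 1; omega) | (exfalso; omega)
  rw [hsub1, hsub2]
  -- entries and signs
  have hent1 : Mmat μ (m+2) t ((Fin.last m).castSucc) (Fin.last (m+1))
      = -(((n - 1 - m : ℕ) : ℂ[X])) := by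
    simp only [Mmat, Matrix.of_apply, Fin.coe_castSucc, Fin.val_last]
    rw [if_neg (by omega)]
    simp
  have hent2 : Mmat μ (m+2) t (Fin.last (m+1)) (Fin.last (m+1)) = csq μ t := by
    simp only [Mmat, Matrix.of_apply, Fin.val_last]
    rw [if_pos (by omega)]
    congr 1
    omega
  have hsign1 : (-1 : ℂ[X]) ^ ((((Fin.last m).castSucc : Fin (m+2)) : ℕ) + ((Fin.last (m+1) : Fin (m+2)) : ℕ))
      = -1 := by
    simp only [Fin.coe_castSucc, Fin.val_last]
    exact Odd.neg_one_pow ⟨m, by omega⟩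
  have hsign2 : (-1 : ℂ[X]) ^ (((Fin.last (m+1) : Fin (m+2)) : ℕ) + ((Fin.last (m+1) : Fin (m+2)) : ℕ))
      = 1 := by
    simp only [Fin.val_last]
    exact Even.neg_one_pow ⟨m+1, by omega⟩
  rw [hent1, hent2, hsign1, hsign2]
  ring

lemma detD (μ : Fin n → ℂ) (m : ℕ) : ∀ t, (Mmat μ (m+1) t).det
    = ∑ j ∈ range (m+1), (∏ i ∈ Finset.Ico j m, (((n-1-i : ℕ)) : ℂ[X]))
        * (csq μ ((m-j) + t) * (Mmat μ j 0).det) := by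
  induction m with
  | zero =>
    intro t
    rw [Mmat_one]
    simp [Matrix.det_fin_zero]
  | succ m ih =>
    intro t
    rw [detrec μ m t, ih (t+1),
      Finset.sum_range_succ (fun j => (∏ i ∈ Finset.Ico j (m+1), (((n-1-i : ℕ)) : ℂ[X]))
        * (csq μ ((m+1-j) + t) * (Mmat μ j 0).det)) (m+1),
      Finset.Ico_self, Finset.prod_empty, one_mul, Nat.sub_self, zero_add,
      add_comm (csq μ t * (Mmat μ (m+1) 0).det)]
    congr 1
    rw [Finset.mul_sum]
    refine Finset.sum_congr rfl fun j hj => ?_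
    have hj' : j < m+1 := Finset.mem_range.mp hj
    rw [Finset.prod_Ico_succ_top (by omega : j ≤ m),
      show m-j+(t+1) = m+1-j+t by omega]
    ring

lemma sum_reflect_CG (μ : Fin n → ℂ) (m' : ℕ) :
    ∑ j ∈ range (m'+1), csq μ (m'-j) * PowerSeries.coeff j (Gps μ)
      = PowerSeries.coeff m' (Cps μ * Gps μ) := by
  have h1 : ∀ j ∈ range (m'+1), csq μ (m'-j) * PowerSeries.coeff j (Gps μ)
      = (fun k => csq μ k * PowerSeries.coeff (m'-k) (Gps μ)) ((m'+1)-1-j) := by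
    intro j hj
    have hj' : j < m'+1 := Finset.mem_range.mp hj
    simp only
    rw [show m'+1-1-j = m'-j from by omega, show m'-(m'-j) = j from by omega]
  rw [Finset.sum_congr rfl h1,
    Finset.sum_range_reflect (fun k => csq μ k * PowerSeries.coeff (m'-k) (Gps μ)) (m'+1),
    coeff_mul_range]
  simp only [Cps, PowerSeries.coeff_mk]

lemma detD_merge (μ : Fin n → ℂ) (m' : ℕ)
    (hall : ∀ j, j < m'+1 → (Mmat μ j 0).det
      = C ((((n-1).descFactorial j : ℕ)):ℂ) * PowerSeries.coeff j (Gps μ)) :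
    (Mmat μ (m'+1) 0).det
      = C ((((n-1).descFactorial m' : ℕ)):ℂ) * PowerSeries.coeff m' (Cps μ * Gps μ) := by
  rw [detD μ m' 0]
  have hterm : ∀ j ∈ range (m'+1),
      (∏ i ∈ Finset.Ico j m', (((n-1-i : ℕ)) : ℂ[X])) * (csq μ ((m'-j)+0) * (Mmat μ j 0).det)
      = C ((((n-1).descFactorial m' : ℕ)):ℂ)
          * (csq μ (m'-j) * PowerSeries.coeff j (Gps μ)) := by
    intro j hj
    have hj' : j < m'+1 := Finset.mem_range.mp hj
    rw [hall j hj', Nat.add_zero]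
    have hprod : (∏ i ∈ Finset.Ico j m', (((n-1-i : ℕ)) : ℂ[X]))
        = C ((((∏ i ∈ Finset.Ico j m', (n-1-i)) : ℕ)):ℂ) := by
      rw [Polynomial.C_eq_natCast, Nat.cast_prod]
    have hdf : ((∏ i ∈ Finset.Ico j m', (n-1-i)) : ℕ) * (n-1).descFactorial j
        = (n-1).descFactorial m' := by
      rw [Nat.descFactorial_eq_prod_range (n-1) j, Nat.descFactorial_eq_prod_range (n-1) m',
        mul_comm, Finset.prod_range_mul_prod_Ico _ (by omega : j ≤ m')]
    rw [hprod,
      show C ((((∏ i ∈ Finset.Ico j m', (n-1-i)) : ℕ)):ℂ)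
          * (csq μ (m'-j) * (C ((((n-1).descFactorial j : ℕ)):ℂ) * PowerSeries.coeff j (Gps μ)))
        = (C ((((∏ i ∈ Finset.Ico j m', (n-1-i)) : ℕ)):ℂ) * C ((((n-1).descFactorial j : ℕ)):ℂ))
          * (csq μ (m'-j) * PowerSeries.coeff j (Gps μ)) from by ring,
      ← C_mul, ← Nat.cast_mul, hdf]
  rw [Finset.sum_congr rfl hterm, ← Finset.mul_sum, sum_reflect_CG]

lemma FpG (μ : Fin n → ℂ) : ∀ m, m ≤ n-1 → (Mmat μ m 0).det
    = C ((((n-1).descFactorial m : ℕ)):ℂ) * PowerSeries.coeff m (Gps μ) := by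
  intro m
  induction m using Nat.strong_induction_on with
  | _ m ih =>
    intro hm
    match m with
    | 0 =>
      have hg : PowerSeries.coeff 0 (Gps μ) = 1 := by
        rw [Gps, map_add, coeff_mul_range]
        simp [Kps, PowerSeries.coeff_mk, Kco]
      rw [hg]
      simp [Mmat, Matrix.det_fin_zero]
    | (m'+1) =>
      have hstep := detD_merge μ m' (fun j hj => ih j (by omega) (by omega))
      rw [hstep, ← L1ps μ m' (by omega), ← mul_assoc, ← C_mul]
      congr 2
      have hdfs : (n-1).descFactorial (m'+1) = (n-1-m') * (n-1).descFactorial m' :=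
        Nat.descFactorial_succ (n-1) m'
      rw [hdfs]
      have hc : ((n-1-m' : ℕ) : ℂ) = (n:ℂ) - 1 - (m':ℂ) := by
        rw [show n-1-m' = n-(1+m') by omega, Nat.cast_sub (by omega : 1+m' ≤ n)]
        push_cast
        ring
      push_cast
      rw [hc]
      ring

lemma detMn (μ : Fin n → ℂ) (hn : 1 ≤ n) :
    (Mmat μ n 0).det = C (((n.factorial : ℕ)):ℂ) * asq μ n := by
  obtain ⟨N, rfl⟩ : ∃ N, n = N+1 := ⟨n-1, by omega⟩
  have hstep := detD_merge μ N (fun j hj => FpG μ j (by omega))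
  have hL2 := L2ps μ (by omega : 1 ≤ N+1)
  rw [show N+1-1 = N by omega] at hL2
  rw [hstep, hL2, ← mul_assoc, ← C_mul]
  congr 2
  rw [show (N+1)-1 = N by omega, Nat.descFactorial_self]
  rw [show (N+1).factorial = (N+1) * N.factorial from Nat.factorial_succ N]
  push_cast
  ring

lemma target_eq (μ : Fin n → ℂ) :
    C (((n.factorial : ℕ)):ℂ) * asq μ n
      = X ^ n + ∑ k ∈ Finset.Icc 1 n,
          C ((n.descFactorial k : ℂ) * (∏ i, (X - C (μ i))).coeff (n - k)) * X ^ (n - k) := by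
  rw [asq, Finset.mul_sum]
  have hsplit : range (n+1) = insert 0 (Finset.Icc 1 n) := by
    ext x
    simp only [Finset.mem_range, Finset.mem_insert, Finset.mem_Icc]
    omega
  rw [hsplit, Finset.sum_insert (by simp)]
  congr 1
  · rw [Nat.sub_zero, qc_zero, mul_one, ← mul_assoc, ← C_mul,
      mul_inv_cancel₀ (Nat.cast_ne_zero.mpr (Nat.factorial_ne_zero n)), C_1, one_mul]
  · refine Finset.sum_congr rfl fun k hk => ?_
    obtain ⟨hk1, hk2⟩ := Finset.mem_Icc.mp hk
    rw [← mul_assoc, ← C_mul]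
    congr 2
    have hfd : (n.descFactorial k : ℕ) * (n-k).factorial = n.factorial := by
      rw [mul_comm]
      exact Nat.factorial_mul_descFactorial hk2
    have hcast : ((n.factorial : ℕ) : ℂ)
        = ((n.descFactorial k : ℕ):ℂ) * (((n-k).factorial : ℕ):ℂ) := by
      exact_mod_cast hfd.symm
    have hfz : (((n-k).factorial : ℕ):ℂ) ≠ 0 := Nat.cast_ne_zero.mpr (Nat.factorial_ne_zero _)
    rw [qc, qp, hcast]
    field_simp

end

end NIEP

open NIEP in
/-- If all power sums x₁,...,xₙ of the roots μ₁,...,μₙ of the monic polynomial q are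
    nonnegative reals, then the roots of Q(x) = x^n + Σ n(n-1)⋯(n-k+1) q_k x^{n-k}
    form the spectrum of an entrywise nonnegative real matrix. -/
theorem realizable_of_nonneg_power_sums (n : ℕ) (μ : Fin n → ℂ)
    (h : ∀ k ∈ Finset.Icc 1 n, 0 ≤ (∑ i, μ i ^ k).re ∧ (∑ i, μ i ^ k).im = 0) :
    ∃ A : Matrix (Fin n) (Fin n) ℝ, (∀ i j, 0 ≤ A i j) ∧
      (A.map Complex.ofReal).charpoly =
        X ^ n + ∑ k ∈ Finset.Icc 1 n,
          C ((n.descFactorial k : ℂ) * (∏ i, (X - C (μ i))).coeff (n - k)) * X ^ (n - k) := by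
  classical
  rcases Nat.eq_zero_or_pos n with rfl | hn
  · refine ⟨0, fun i j => le_refl _, ?_⟩
    have h1 : (Matrix.map (0 : Matrix (Fin 0) (Fin 0) ℝ) Complex.ofReal).charpoly = 1 :=
      Matrix.det_fin_zero
    rw [h1, Finset.Icc_eq_empty (by omega), Finset.sum_empty, pow_zero, add_zero]
  · have hre : ∀ k, 1 ≤ k → k ≤ n → (((pw μ k).re : ℝ) : ℂ) = pw μ k := by
      intro k h1 h2
      have him : (pw μ k).im = 0 := (h k (Finset.mem_Icc.mpr ⟨h1, h2⟩)).2
      exact Complex.ext rfl (by simp [him])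
    refine ⟨Matrix.of fun i j =>
      if (j:ℕ) = (i:ℕ)+1 then ((n-1-(i:ℕ) : ℕ) : ℝ)
      else if (j:ℕ) ≤ (i:ℕ) then (pw μ ((i:ℕ)-(j:ℕ)+1)).re
      else 0, ?_, ?_⟩
    · intro i j
      simp only [Matrix.of_apply]
      split_ifs with h1 h2
      · exact Nat.cast_nonneg _
      · exact (h ((i:ℕ)-(j:ℕ)+1)
          (Finset.mem_Icc.mpr ⟨by omega, by have := i.isLt; omega⟩)).1
      · exact le_refl _
    · have hcm : charmatrix ((Matrix.of fun i j =>
          if (j:ℕ) = (i:ℕ)+1 then ((n-1-(i:ℕ) : ℕ) : ℝ)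
          else if (j:ℕ) ≤ (i:ℕ) then (pw μ ((i:ℕ)-(j:ℕ)+1)).re
          else 0 : Matrix (Fin n) (Fin n) ℝ).map Complex.ofReal) = Mmat μ n 0 := by
        refine Matrix.ext fun i j => ?_
        have hi2 : (i:ℕ) < n := i.isLt
        have hj2 : (j:ℕ) < n := j.isLt
        by_cases hij : i = j
        · subst hij
          rw [charmatrix_apply_eq, Matrix.map_apply]
          simp only [Matrix.of_apply, Mmat, csq]
          rw [if_neg (by omega : ¬((i:ℕ) = (i:ℕ)+1)), if_pos (le_refl ((i:ℕ))),
            hre ((i:ℕ)-(i:ℕ)+1) (by omega) (by omega)]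
          by_cases h3 : (i:ℕ) = n-1
          · rw [if_pos h3, if_pos (by omega : n-1-(i:ℕ)+0 = 0),
              show n-1-(i:ℕ)+0+1 = (i:ℕ)-(i:ℕ)+1 from by omega]
          · rw [if_neg h3, if_neg (by omega : ¬((i:ℕ) = (i:ℕ)+1)),
              if_pos (le_refl ((i:ℕ))), if_pos (by omega : (i:ℕ)-(i:ℕ) = 0)]
        · have hij' : (i:ℕ) ≠ (j:ℕ) := fun hc => hij (Fin.ext hc)
          rw [charmatrix_apply_ne _ _ _ hij, Matrix.map_apply]
          simp only [Matrix.of_apply, Mmat, csq]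
          by_cases h1 : (j:ℕ) = (i:ℕ)+1
          · rw [if_pos h1, if_neg (by omega : ¬((i:ℕ) = n-1)), if_pos h1,
              Complex.ofReal_natCast, map_natCast]
          · by_cases h2 : (j:ℕ) ≤ (i:ℕ)
            · rw [if_neg h1, if_pos h2, hre ((i:ℕ)-(j:ℕ)+1) (by omega) (by omega)]
              by_cases h3 : (i:ℕ) = n-1
              · rw [if_pos h3, if_neg (by omega : ¬(n-1-(j:ℕ)+0 = 0)), zero_sub,
                  show n-1-(j:ℕ)+0+1 = (i:ℕ)-(j:ℕ)+1 from by omega]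
              · rw [if_neg h3, if_neg h1, if_pos h2,
                  if_neg (by omega : ¬((i:ℕ)-(j:ℕ) = 0)), zero_sub]
            · rw [if_neg h1, if_neg h2, if_neg (by omega : ¬((i:ℕ) = n-1)),
                if_neg h1, if_neg h2]
              simp
      have hdet : ((Matrix.of fun i j =>
          if (j:ℕ) = (i:ℕ)+1 then ((n-1-(i:ℕ) : ℕ) : ℝ)
          else if (j:ℕ) ≤ (i:ℕ) then (pw μ ((i:ℕ)-(j:ℕ)+1)).re
          else 0 : Matrix (Fin n) (Fin n) ℝ).map Complex.ofReal).charpoly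
          = (Mmat μ n 0).det := by
        rw [show ((Matrix.of fun i j =>
          if (j:ℕ) = (i:ℕ)+1 then ((n-1-(i:ℕ) : ℕ) : ℝ)
          else if (j:ℕ) ≤ (i:ℕ) then (pw μ ((i:ℕ)-(j:ℕ)+1)).re
          else 0 : Matrix (Fin n) (Fin n) ℝ).map Complex.ofReal).charpoly
          = (charmatrix _).det from rfl, hcm]
      rw [hdet, detMn μ hn, target_eq μ]
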